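/- arXiv:math/0611267 — 6 statements merged into one kernel-verified Lean document; each statement's English description precedes it below -/
import Mathlib

section
/- Let k ≥ 1 and let (y_1, ..., y_m) be a partition of 2k (with y_1 ≥ ... ≥ y_m ≥ 1) having m ≥ k parts. Then (y_j) fails to refine the partition (k,k) if and only if either (y_j) = (k+1, 1, ..., 1), or k is odd and (y_j) = (2, ..., 2). -/
def IsPartition (d : ℕ) (l : List ℕ) : Prop :=
  l.Pairwise (· ≥ ·) ∧ (∀ x ∈ l, 0 < x) ∧ l.sum = d

def RefinesKK (y : List ℕ) (k : ℕ) : Prop :=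
  ∃ l₁ l₂ : List ℕ, (l₁ ++ l₂).Perm y ∧ l₁.sum = k ∧ l₂.sum = k

lemma aux_len_le_sum (l : List ℕ) (c : ℕ) (h : ∀ x ∈ l, c ≤ x) :
    l.length * c ≤ l.sum := by
  have := List.card_nsmul_le_sum l c h
  simpa [smul_eq_mul] using this

lemma aux_all_eq (l : List ℕ) (c : ℕ) (hlb : ∀ x ∈ l, c ≤ x)
    (hs : l.sum = l.length * c) : ∀ x ∈ l, x = c := by
  induction l with
  | nil => simp
  | cons x xs ih =>
    have h1 : c ≤ x := hlb x (List.mem_cons_self)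
    have h2 : ∀ y ∈ xs, c ≤ y := fun y hy => hlb y (List.mem_cons_of_mem _ hy)
    have h3 := aux_len_le_sum xs c h2
    simp only [List.sum_cons, List.length_cons] at hs
    have hx : x = c := by nlinarith
    have hxs : xs.sum = xs.length * c := by nlinarith
    intro y hy
    rcases List.mem_cons.mp hy with rfl | hy'
    · exact hx
    · exact ih h2 hxs y hy'

lemma greedy_ex (l : List ℕ) : ∀ n : ℕ, ∃ p r : List ℕ, p ++ r = l ∧ p.sum ≤ n ∧
    ∀ w r', r = w :: r' → n < p.sum + w := by
  induction l with
  | nil => exact fun n => ⟨[], [], rfl, by simp, by simp⟩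
  | cons x xs ih =>
    intro n
    by_cases hx : x ≤ n
    · obtain ⟨p, r, hpr, hs, hw⟩ := ih (n - x)
      refine ⟨x :: p, r, by simp [hpr], by simp only [List.sum_cons]; omega, ?_⟩
      intro w r' hr
      have := hw w r' hr
      simp only [List.sum_cons]
      omega
    · refine ⟨[], x :: xs, rfl, by simp, ?_⟩
      intro w r' hr
      injection hr with h1 h2
      subst h1
      simpa using hx

lemma decomp (l : List ℕ) (hs : l.Pairwise (· ≥ ·)) (hp : ∀ x ∈ l, 0 < x) :
    ∃ z a, l = z ++ List.replicate a 1 ∧ ∀ x ∈ z, 2 ≤ x := by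
  induction l with
  | nil => exact ⟨[], 0, rfl, by simp⟩
  | cons x xs ih =>
    obtain ⟨z, a, heq, hz⟩ := ih hs.of_cons (fun y hy => hp y (List.mem_cons_of_mem _ hy))
    by_cases hx : 2 ≤ x
    · refine ⟨x :: z, a, by simp [heq], ?_⟩
      intro y hy
      rcases List.mem_cons.mp hy with rfl | hy'
      · exact hx
      · exact hz y hy'
    · have hall : ∀ y ∈ x :: xs, y = 1 := by
        intro y hy
        rcases List.mem_cons.mp hy with rfl | hy'
        · have := hp y (List.mem_cons_self); omega
        · have h1 := List.rel_of_pairwise_cons hs hy'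
          have h2 := hp y (List.mem_cons_of_mem _ hy')
          have := hp x (List.mem_cons_self)
          omega
      refine ⟨[], (x :: xs).length, ?_, by simp⟩
      simpa using List.eq_replicate_of_mem hall

lemma perm_shuffle (p r : List ℕ) (d e c : ℕ) :
    ((p ++ List.replicate d c) ++ (r ++ List.replicate e c)).Perm
      ((p ++ r) ++ List.replicate (d + e) c) := by
  rw [← Multiset.coe_eq_coe]
  simp only [← Multiset.coe_add, ← Multiset.coe_replicate, List.replicate_add]
  push_cast
  abel

lemma refines_of {y l₁ l₂ : List ℕ} {k : ℕ} (hperm : (l₁ ++ l₂).Perm y)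
    (hsum : y.sum = 2 * k) (h1 : l₁.sum = k) : RefinesKK y k := by
  refine ⟨l₁, l₂, hperm, h1, ?_⟩
  have h := hperm.sum_eq
  simp only [List.sum_append] at h
  omega

lemma not_refines_exc1 (k : ℕ) (hk : 1 ≤ k) :
    ¬ RefinesKK ((k + 1) :: List.replicate (k - 1) 1) k := by
  rintro ⟨l₁, l₂, hperm, h1, h2⟩
  have hmem : k + 1 ∈ l₁ ++ l₂ := hperm.mem_iff.mpr (List.mem_cons_self)
  rcases List.mem_append.mp hmem with h | h
  · have := List.single_le_sum (l := l₁) (by simp) _ h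
    omega
  · have := List.single_le_sum (l := l₂) (by simp) _ h
    omega

lemma not_refines_exc2 (k : ℕ) (hodd : Odd k) :
    ¬ RefinesKK (List.replicate k 2) k := by
  rintro ⟨l₁, l₂, hperm, h1, h2⟩
  have hall : ∀ x ∈ l₁, x = 2 := by
    intro x hx
    have : x ∈ List.replicate k 2 := hperm.mem_iff.mp (List.mem_append_left _ hx)
    exact List.eq_of_mem_replicate this
  have : l₁ = List.replicate l₁.length 2 := List.eq_replicate_of_mem hall
  rw [this, List.sum_replicate, smul_eq_mul] at h1
  obtain ⟨t, ht⟩ := hodd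
  omega

lemma main_tri (k : ℕ) (hk : 1 ≤ k) (y : List ℕ)
    (hy : IsPartition (2 * k) y) (hm : k ≤ y.length) :
    RefinesKK y k ∨ y = (k + 1) :: List.replicate (k - 1) 1 ∨
      (Odd k ∧ y = List.replicate k 2) := by
  obtain ⟨hsort, hpos, hsum⟩ := hy
  obtain ⟨y₀, yt, rfl⟩ : ∃ y₀ yt, y = y₀ :: yt := by
    cases y with
    | nil => simp at hm; omega
    | cons a l => exact ⟨a, l, rfl⟩
  have hytlen : yt.length * 1 ≤ yt.sum :=
    aux_len_le_sum yt 1 (fun x hx => hpos x (List.mem_cons_of_mem _ hx))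
  simp only [List.sum_cons] at hsum
  simp only [List.length_cons] at hm
  have hy0le : y₀ ≤ k + 1 := by omega
  by_cases hy0 : y₀ = k + 1
  · -- exceptional case 1
    subst hy0
    have htl : yt.length = k - 1 := by omega
    have hall : ∀ x ∈ yt, x = 1 := by
      apply aux_all_eq yt 1 (fun x hx => hpos x (List.mem_cons_of_mem _ hx))
      omega
    right; left
    have := List.eq_replicate_of_mem hall
    rw [htl] at this
    rw [this]
  · -- all entries ≤ k
    have hle : ∀ x ∈ y₀ :: yt, x ≤ k := by
      intro x hx
      rcases List.mem_cons.mp hx with rfl | hx'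
      · omega
      · have := List.rel_of_pairwise_cons hsort hx'; omega
    set Y := y₀ :: yt with hY
    have hYsum : Y.sum = 2 * k := by simp [hY]; omega
    have hYlen : k ≤ Y.length := by simp [hY]; omega
    clear hytlen hsum hm hy0le hy0
    obtain ⟨z, a, hzeq, hz2⟩ := decomp Y hsort hpos
    have hzsum : z.sum + a = 2 * k := by
      rw [hzeq] at hYsum; simpa [List.sum_append] using hYsum
    have hzlen : k ≤ z.length + a := by
      rw [hzeq] at hYlen; simpa using hYlen
    by_cases hka : k ≤ a
    · -- enough ones
      left
      apply refines_of (l₁ := List.replicate k 1) (l₂ := z ++ List.replicate (a - k) 1)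
        ?_ hYsum (by simp)
      rw [hzeq]
      have h := perm_shuffle ([] : List ℕ) z k (a - k) 1
      rw [show k + (a - k) = a by omega] at h
      simpa using h
    · push_neg at hka
      by_cases ha0 : a = 0
      · -- all parts ≥ 2 : y = replicate k 2
        subst ha0
        simp only [List.replicate_zero, List.append_nil] at hzeq
        have hz2' : ∀ x ∈ Y, 2 ≤ x := by rw [hzeq]; exact hz2
        have h2l := aux_len_le_sum Y 2 hz2'
        have hlen : Y.length = k := by omega
        have hall : ∀ x ∈ Y, x = 2 := by
          apply aux_all_eq Y 2 hz2'
          omega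
        have hYrep : Y = List.replicate k 2 := by
          have := List.eq_replicate_of_mem hall
          rwa [hlen] at this
        rcases Nat.even_or_odd k with he | ho
        · left
          obtain ⟨j, hj⟩ := he
          apply refines_of (l₁ := List.replicate j 2) (l₂ := List.replicate j 2)
            ?_ hYsum (by simp [smul_eq_mul]; omega)
          rw [hYrep, ← List.replicate_add]
          have : j + j = k := by omega
          rw [this]
        · right; right; exact ⟨ho, hYrep⟩
      · -- a ≥ 1, greedy on z
        have ha1 : 1 ≤ a := by omega
        obtain ⟨p, r, hpr, hps, hpw⟩ := greedy_ex z k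
        cases r with
        | nil =>
          exfalso
          rw [List.append_nil] at hpr
          rw [hpr] at hps
          omega
        | cons w r' =>
          have hw := hpw w r' rfl
          set s := p.sum with hsdef
          by_cases hda : k - s ≤ a
          · left
            apply refines_of (l₁ := p ++ List.replicate (k - s) 1)
              (l₂ := (w :: r') ++ List.replicate (a - (k - s)) 1) ?_ hYsum
              (by simp [List.sum_append, smul_eq_mul]; omega)
            rw [hzeq, ← hpr]
            have h := perm_shuffle p (w :: r') (k - s) (a - (k - s)) 1
            rw [show (k - s) + (a - (k - s)) = a by omega] at h
            exact h
          · -- contradiction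
            exfalso
            push_neg at hda
            have hsorted_z : z.Pairwise (· ≥ ·) := by
              rw [hzeq, List.pairwise_append] at hsort
              exact hsort.1
            have hp_ge_w : ∀ x ∈ p, w ≤ x := by
              intro x hx
              rw [← hpr, List.pairwise_append] at hsorted_z
              exact hsorted_z.2.2 x hx w (List.mem_cons_self)
            have hP : p.length * w ≤ s := aux_len_le_sum p w hp_ge_w
            have hR : r'.length * 2 ≤ r'.sum := by
              apply aux_len_le_sum
              intro x hx
              apply hz2
              rw [← hpr]
              exact List.mem_append_right _ (List.mem_cons_of_mem _ hx)
            have hwk : w ≤ k := by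
              apply hle
              rw [hY] at hzeq ⊢
              rw [hzeq]
              apply List.mem_append_left
              rw [← hpr]
              exact List.mem_append_right _ (List.mem_cons_self)
            have hzsum' : s + (w + r'.sum) = z.sum := by
              rw [← hpr]; simp [List.sum_append, hsdef]
            have hzlen' : z.length = p.length + 1 + r'.length := by
              rw [← hpr]; simp; omega
            have hs1 : 1 ≤ s := by omega
            have hwa : a + 2 ≤ w := by omega
            have hstar : s + w ≤ 2 * p.length + 2 + a := by omega
            have key : s * w ≤ 2 * s := by
              calc s * w ≤ (s + w - a - 2) * w := Nat.mul_le_mul_right _ (by omega)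
                _ ≤ (2 * p.length) * w := Nat.mul_le_mul_right _ (by omega)
                _ = 2 * (p.length * w) := by ring
                _ ≤ 2 * s := by omega
            have hw2 : w ≤ 2 := by
              by_contra hcon
              push_neg at hcon
              nlinarith
            omega

theorem stmt0 (k : ℕ) (hk : 1 ≤ k) (y : List ℕ)
    (hy : IsPartition (2 * k) y) (hm : k ≤ y.length) :
    ¬ RefinesKK y k ↔
      (y = (k + 1) :: List.replicate (k - 1) 1 ∨ (Odd k ∧ y = List.replicate k 2)) := by
  constructor
  · intro hnR
    rcases main_tri k hk y hy hm with h | h | h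
    · exact absurd h hnR
    · exact Or.inl h
    · exact Or.inr h
  · rintro (rfl | ⟨hodd, rfl⟩)
    · exact not_refines_exc1 k hk
    · exact not_refines_exc2 k hodd
end

section
/- Let d ≥ 5 be odd and let (d_{2j})_{j=1}^{m_2} and (d_{3j})_{j=1}^{m_3} be partitions of d with m_2 + m_3 = d, and suppose neither partition is the single-part partition (d). Then either the multiset union of the two partitions contains at least two parts equal to 1, or (up to swapping the two partitions) (d_{2j}) = (3,2,...,2) and (d_{3j}) = (2,...,2,1). -/
def Fex (l : List ℕ) : ℕ := (l.map (fun a => if a = 1 then 0 else a - 2)).sum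

lemma Fex_spec (l : List ℕ) (h : ∀ x ∈ l, 0 < x) :
    l.sum + l.count 1 = 2 * l.length + Fex l := by
  induction l with
  | nil => simp [Fex]
  | cons a t ih =>
    have ha := h a (List.mem_cons_self)
    have ht := ih (fun x hx => h x (List.mem_cons_of_mem _ hx))
    simp only [Fex, List.map_cons, List.sum_cons, List.count_cons, List.length_cons] at *
    by_cases h1 : a = 1 <;> simp [h1] <;> omega

lemma Fex_zero (l : List ℕ) (h : ∀ x ∈ l, 0 < x) (hF : Fex l = 0) :
    ∀ x ∈ l, x = 1 ∨ x = 2 := by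
  induction l with
  | nil => simp
  | cons a t ih =>
    have ha := h a (List.mem_cons_self)
    simp only [Fex, List.map_cons, List.sum_cons, Nat.add_eq_zero] at hF
    intro x hx
    rcases List.mem_cons.1 hx with rfl | hx
    · by_cases h1 : x = 1
      · left; exact h1
      · right; simp [h1] at hF; omega
    · exact ih (fun y hy => h y (List.mem_cons_of_mem _ hy)) hF.2 x hx

lemma Fex_one (l : List ℕ) (h : ∀ x ∈ l, 0 < x) (hc : l.count 1 = 0) (hF : Fex l = 1) :
    (∀ x ∈ l, x = 2 ∨ x = 3) ∧ l.count 3 = 1 := by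
  induction l with
  | nil => simp [Fex] at hF
  | cons a t ih =>
    have ha := h a (List.mem_cons_self)
    have ht : ∀ x ∈ t, 0 < x := fun x hx => h x (List.mem_cons_of_mem _ hx)
    have ha1 : a ≠ 1 := fun h1 => by simp [h1, List.count_cons] at hc
    have hct : t.count 1 = 0 := by simpa [List.count_cons, ha1] using hc
    simp only [Fex, List.map_cons, List.sum_cons, if_neg ha1] at hF
    have ha2 : 2 ≤ a := by omega
    rcases Nat.lt_or_ge a 4 with h4 | h4
    · interval_cases a
      · -- a = 2
        have hFt : Fex t = 1 := by simpa [Fex] using hF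
        obtain ⟨hmem, hcnt⟩ := ih ht hct hFt
        refine ⟨?_, ?_⟩
        · intro x hx
          rcases List.mem_cons.1 hx with rfl | hx
          · left; rfl
          · exact hmem x hx
        · simp [List.count_cons, hcnt]
      · -- a = 3
        have hFt : Fex t = 0 := by simpa [Fex] using hF
        have h12 := Fex_zero t ht hFt
        have hall : ∀ x ∈ t, x = 2 := by
          intro x hx
          rcases h12 x hx with rfl | rfl
          · exact absurd (List.count_pos_iff.2 hx) (by omega)
          · rfl
        have h3t : t.count 3 = 0 := by
          refine List.count_eq_zero.2 fun h3 => ?_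
          have := hall 3 h3; omega
        refine ⟨?_, ?_⟩
        · intro x hx
          rcases List.mem_cons.1 hx with rfl | hx
          · right; rfl
          · left; exact hall x hx
        · simp [List.count_cons, h3t]
    · omega

lemma sorted_form3 (l : List ℕ) (hs : l.Pairwise (· ≥ ·))
    (h23 : ∀ x ∈ l, x = 2 ∨ x = 3) (h3 : l.count 3 = 1) :
    l = 3 :: List.replicate (l.length - 1) 2 := by
  cases l with
  | nil => simp at h3
  | cons a t =>
    obtain ⟨hge, hts⟩ := List.pairwise_cons.1 hs
    have ha : a = 3 := by
      rcases h23 a (List.mem_cons_self) with rfl | rfl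
      · exfalso
        have h3t : 0 < t.count 3 := by
          simp only [List.count_cons] at h3
          by_cases h : (2 : ℕ) = 3 <;> simp [h] at h3 <;> omega
        have := hge 3 (List.count_pos_iff.1 h3t)
        omega
      · rfl
    subst ha
    rw [List.count_cons_self] at h3
    have h3t : t.count 3 = 0 := by omega
    have hall : ∀ x ∈ t, x = 2 := by
      intro x hx
      rcases h23 x (List.mem_cons_of_mem _ hx) with rfl | rfl
      · rfl
      · exact absurd (List.count_pos_iff.2 hx) (by omega)
    have hrep : t = List.replicate t.length 2 := List.eq_replicate_of_mem hall
    rw [List.length_cons, Nat.add_sub_cancel]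
    exact congrArg (3 :: ·) hrep

lemma sorted_form1 (l : List ℕ) (hs : l.Pairwise (· ≥ ·))
    (h12 : ∀ x ∈ l, x = 1 ∨ x = 2) (h1 : l.count 1 = 1) :
    l = List.replicate (l.length - 1) 2 ++ [1] := by
  induction l with
  | nil => simp at h1
  | cons a t ih =>
    obtain ⟨hge, hts⟩ := List.pairwise_cons.1 hs
    rcases h12 a (List.mem_cons_self) with rfl | rfl
    · -- a = 1
      rw [List.count_cons_self] at h1
      have hct : t.count 1 = 0 := by omega
      have ht : t = [] := by
        cases t with
        | nil => rfl
        | cons b t' =>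
          exfalso
          have hb := hge b (List.mem_cons_self)
          rcases h12 b (by simp) with rfl | rfl
          · rw [List.count_cons_self] at hct; omega
          · omega
      subst ht; simp
    · -- a = 2
      have hct : t.count 1 = 1 := by
        rw [List.count_cons] at h1
        by_cases h : (1:ℕ) = 2 <;> simp [h] at h1 <;> omega
      have htform := ih hts (fun x hx => h12 x (List.mem_cons_of_mem _ hx)) hct
      have htne : t ≠ [] := by intro h; simp [h] at hct
      have hlen : 1 ≤ t.length := List.length_pos_iff.2 htne
      conv_lhs => rw [htform]
      rw [List.length_cons, Nat.add_sub_cancel,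
        show t.length = (t.length - 1) + 1 by omega, List.replicate_succ]
      simp

lemma sum_form3 (k : ℕ) : (3 :: List.replicate k 2).sum = 3 + 2 * k := by
  simp [List.sum_replicate, mul_comm]

lemma sum_form1 (k : ℕ) : (List.replicate k 2 ++ [1]).sum = 2 * k + 1 := by
  simp [List.sum_replicate, mul_comm]

lemma key (d : ℕ) (hd : 5 ≤ d) (hodd : Odd d) (pa pb : List ℕ)
    (h2 : IsPartition d pa) (h3 : IsPartition d pb)
    (hFa : Fex pa = 1) (hFb : Fex pb = 0)
    (hc : pa.count 1 + pb.count 1 = 1) :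
    pa = 3 :: List.replicate ((d - 3) / 2) 2 ∧
      pb = List.replicate ((d - 1) / 2) 2 ++ [1] := by
  obtain ⟨hsa, hpa, sa⟩ := h2
  obtain ⟨hsb, hpb, sb⟩ := h3
  obtain ⟨m, hm⟩ := hodd
  have hb12 := Fex_zero pb hpb hFb
  have specb := Fex_spec pb hpb
  rw [sb, hFb] at specb
  have hcb : pb.count 1 = 1 := by omega
  have hca : pa.count 1 = 0 := by omega
  obtain ⟨ha23, ha3⟩ := Fex_one pa hpa hca hFa
  have hform_a := sorted_form3 pa hsa ha23 ha3
  have hform_b := sorted_form1 pb hsb hb12 hcb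
  have hla : pa.sum = 3 + 2 * (pa.length - 1) := by
    conv_lhs => rw [hform_a]
    exact sum_form3 _
  have hlb : pb.sum = 2 * (pb.length - 1) + 1 := by
    conv_lhs => rw [hform_b]
    exact sum_form1 _
  have hka : pa.length - 1 = (d - 3) / 2 := by omega
  have hkb : pb.length - 1 = (d - 1) / 2 := by omega
  rw [hka] at hform_a
  rw [hkb] at hform_b
  exact ⟨hform_a, hform_b⟩

theorem stmt1 (d : ℕ) (hd : 5 ≤ d) (hodd : Odd d) (p2 p3 : List ℕ)
    (h2 : IsPartition d p2) (h3 : IsPartition d p3)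
    (hlen : p2.length + p3.length = d)
    (hn2 : p2 ≠ [d]) (hn3 : p3 ≠ [d]) :
    2 ≤ (p2 ++ p3).count 1 ∨
      (p2 = 3 :: List.replicate ((d - 3) / 2) 2 ∧
        p3 = List.replicate ((d - 1) / 2) 2 ++ [1]) ∨
      (p3 = 3 :: List.replicate ((d - 3) / 2) 2 ∧
        p2 = List.replicate ((d - 1) / 2) 2 ++ [1]) := by
  rw [List.count_append]
  by_cases hcount : 2 ≤ p2.count 1 + p3.count 1
  · left; exact hcount
  right
  obtain ⟨hs2, hp2, s2⟩ := h2
  obtain ⟨hs3, hp3, s3⟩ := h3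
  have spec2 := Fex_spec p2 hp2
  have spec3 := Fex_spec p3 hp3
  rw [s2] at spec2
  rw [s3] at spec3
  obtain ⟨m, hm⟩ := hodd
  have hFsum : Fex p2 + Fex p3 = p2.count 1 + p3.count 1 := by omega
  have hc1 : p2.count 1 + p3.count 1 = 1 := by
    rcases Nat.lt_or_ge (p2.count 1 + p3.count 1) 1 with h | h
    · exfalso
      have : Fex p2 = 0 := by omega
      omega
    · omega
  rcases Nat.eq_zero_or_pos (Fex p3) with hF3 | hF3
  · left
    exact key d hd ⟨m, hm⟩ p2 p3 ⟨hs2, hp2, s2⟩ ⟨hs3, hp3, s3⟩ (by omega) hF3 hc1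
  · right
    have hF2 : Fex p2 = 0 := by omega
    have := key d hd ⟨m, hm⟩ p3 p2 ⟨hs3, hp3, s3⟩ ⟨hs2, hp2, s2⟩ (by omega) hF2 (by omega)
    exact ⟨this.1, this.2⟩
end

section
/- Let g ≥ 2 and d ≥ 2 and let (d_{2j})_{j=1}^{m_2}, (d_{3j})_{j=1}^{m_3} be partitions of d (non-increasing) with m_2 + m_3 = d - 2g. Then at least one of the following holds, up to swapping the two partitions: (1) d_{3,m_3} = 1; (2) all parts of both partitions are at least 2, and the last two parts of (d_{3j}) both equal 2; (3) the last part of (d_{2j}) and the last part of (d_{3j}) both equal 2; (4) there is an index j with d_{3j} ≥ 3 and d_{21} > d_{3j}; (5) all parts of both partitions are equal to one and the same integer k. -/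
/-- The five cases of the lemma, for the ordered pair of partitions `(a, b)`. -/
def FiveCases (a b : List ℕ) : Prop :=
  -- (1) the smallest part of `b` is 1
  b.getLastD 0 = 1 ∨
  -- (2) all parts of both partitions are ≥ 2, and the last two parts of `b` equal 2
  ((∀ x ∈ a, 2 ≤ x) ∧ (∀ x ∈ b, 2 ≤ x) ∧
    b.getLastD 0 = 2 ∧ b.dropLast.getLastD 0 = 2) ∨
  -- (3) the last parts of `a` and `b` both equal 2
  (a.getLastD 0 = 2 ∧ b.getLastD 0 = 2) ∨
  -- (4) some part of `b` is ≥ 3 and smaller than the largest part of `a`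
  (∃ x ∈ b, 3 ≤ x ∧ x < a.headD 0) ∨
  -- (5) all parts of both partitions are one and the same integer `k`
  (∃ k, (∀ x ∈ a, x = k) ∧ (∀ x ∈ b, x = k))

lemma my_getLastD_mem (l : List ℕ) (h : l ≠ []) : l.getLastD 0 ∈ l := by
  rw [List.getLastD_eq_getLast?, List.getLast?_eq_getLast h]
  exact List.getLast_mem h

lemma my_headD_mem (l : List ℕ) (h : l ≠ []) : l.headD 0 ∈ l := by
  cases l with
  | nil => simp at h
  | cons a t => simp

lemma le_headD_of_sorted (l : List ℕ) (hs : l.Pairwise (· ≥ ·)) (x : ℕ) (hx : x ∈ l) :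
    x ≤ l.headD 0 := by
  cases l with
  | nil => simp at hx
  | cons a t =>
    rcases List.mem_cons.1 hx with rfl | h
    · simp
    · exact List.rel_of_pairwise_cons hs h

lemma getLastD_le_of_sorted (l : List ℕ) (hs : l.Pairwise (· ≥ ·)) :
    ∀ x ∈ l, l.getLastD 0 ≤ x := by
  induction l with
  | nil => simp
  | cons a t ih =>
    intro x hx
    rcases List.mem_cons.1 hx with rfl | h
    · cases t with
      | nil => simp
      | cons b u =>
        have h1 : (b::u).getLastD 0 ≤ b := ih hs.of_cons b (by simp)
        have h2 : b ≤ x := List.rel_of_pairwise_cons hs (by simp)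
        simpa using le_trans h1 h2
    · cases t with
      | nil => simp at h
      | cons b u => simpa using ih hs.of_cons x h

/-- In a sorted-descending list with all elements ≥ 2 containing a 2, the last element is 2. -/
lemma getLastD_eq_two (l : List ℕ) (hs : l.Pairwise (· ≥ ·)) (h2 : ∀ x ∈ l, 2 ≤ x)
    (hm : 2 ∈ l) : l.getLastD 0 = 2 := by
  have hne : l ≠ [] := List.ne_nil_of_mem hm
  have h1 := getLastD_le_of_sorted l hs 2 hm
  have h3 := h2 _ (my_getLastD_mem l hne)
  omega

lemma sum_count_two_k (k : ℕ) (hk : k ≠ 2) (l : List ℕ) (h : ∀ x ∈ l, x = 2 ∨ x = k) :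
    l.sum = 2 * l.count 2 + k * l.count k ∧ l.length = l.count 2 + l.count k := by
  induction l with
  | nil => simp
  | cons a t ih =>
    obtain ⟨ih1, ih2⟩ := ih (fun x hx => h x (List.mem_cons_of_mem a hx))
    rcases h a List.mem_cons_self with rfl | rfl
    · constructor
      · rw [List.sum_cons, List.count_cons_self, List.count_cons_of_ne (Ne.symm hk), ih1]; ring
      · rw [List.length_cons, List.count_cons_self, List.count_cons_of_ne (Ne.symm hk), ih2]; ring
    · constructor
      · rw [List.sum_cons, List.count_cons_self, List.count_cons_of_ne hk, ih1]; ring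
      · rw [List.length_cons, List.count_cons_self, List.count_cons_of_ne hk, ih2]; ring

/-- Key lemma: both lists nonempty, all of `a` ≥ 2, all of `b` ≥ 3. -/
lemma key_s4 (d : ℕ) (a b : List ℕ) (ha : IsPartition d a) (hb : IsPartition d b)
    (hne_a : a ≠ []) (hne_b : b ≠ [])
    (ha2 : ∀ x ∈ a, 2 ≤ x) (hb3 : ∀ x ∈ b, 3 ≤ x) :
    FiveCases a b ∨ FiveCases b a := by
  obtain ⟨hsa, -, hsuma⟩ := ha
  obtain ⟨hsb, -, hsumb⟩ := hb
  have hlbmem : b.getLastD 0 ∈ b := my_getLastD_mem b hne_b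
  by_cases hcase : b.getLastD 0 < a.headD 0
  · exact Or.inl (Or.inr (Or.inr (Or.inr (Or.inl
      ⟨b.getLastD 0, hlbmem, hb3 _ hlbmem, hcase⟩))))
  push_neg at hcase
  have hax : ∀ x ∈ a, x ≤ b.getLastD 0 :=
    fun x hx => le_trans (le_headD_of_sorted a hsa x hx) hcase
  by_cases h4 : ∃ x ∈ a, 3 ≤ x ∧ x < b.headD 0
  · obtain ⟨x, hx, hx3, hxlt⟩ := h4
    exact Or.inr (Or.inr (Or.inr (Or.inr (Or.inl ⟨x, hx, hx3, hxlt⟩))))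
  push_neg at h4
  by_cases hall2 : ∀ x ∈ a, x = 2
  · -- all of a equals 2; show FiveCases b a, case (2)
    have hsum2 : a.sum = a.length * 2 := by
      have := List.sum_eq_card_nsmul a 2 hall2; simpa using this
    have hd3 : 3 ≤ d := by
      have hmem : b.headD 0 ∈ b := my_headD_mem b hne_b
      have := List.le_sum_of_mem hmem
      have := hb3 _ hmem
      omega
    have hlen2 : 2 ≤ a.length := by omega
    have hla : a.getLastD 0 = 2 := hall2 _ (my_getLastD_mem a hne_a)
    have hdlne : a.dropLast ≠ [] := by
      have : 0 < a.dropLast.length := by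
        rw [List.length_dropLast]; omega
      exact List.ne_nil_of_length_pos this
    have hdla : a.dropLast.getLastD 0 = 2 :=
      hall2 _ ((List.dropLast_sublist _).subset (my_getLastD_mem a.dropLast hdlne))
    exact Or.inr (Or.inr (Or.inl ⟨fun x hx => by have := hb3 x hx; omega, ha2,
      hla, hdla⟩))
  · push_neg at hall2
    obtain ⟨x0, hx0mem, hx0ne⟩ := hall2
    have hx03 : 3 ≤ x0 := by have := ha2 _ hx0mem; omega
    have hx0k : b.headD 0 ≤ x0 := h4 x0 hx0mem hx03
    have hx0le : x0 ≤ b.getLastD 0 := hax x0 hx0mem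
    have hlb_le_hb : b.getLastD 0 ≤ b.headD 0 := le_headD_of_sorted b hsb _ hlbmem
    set k := b.getLastD 0 with hk
    have hhbk : b.headD 0 = k := by omega
    have hx0eq : x0 = k := by omega
    have hk3 : 3 ≤ k := hb3 _ hlbmem
    have hbconst : ∀ y ∈ b, y = k := by
      intro y hy
      have h1 := getLastD_le_of_sorted b hsb y hy
      have h2 := le_headD_of_sorted b hsb y hy
      omega
    have ha2k : ∀ x ∈ a, x = 2 ∨ x = k := by
      intro x hx
      by_cases hx2 : x = 2
      · exact Or.inl hx2
      · have hx3 : 3 ≤ x := by have := ha2 x hx; omega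
        have := h4 x hx hx3
        have := hax x hx
        right; omega
    by_cases h2a : 2 ∈ a
    · -- count analysis
      have hkne2 : k ≠ 2 := by omega
      obtain ⟨hsum, hlen⟩ := sum_count_two_k k hkne2 a ha2k
      have hsumbk : b.sum = b.length * k := by
        have := List.sum_eq_card_nsmul b k hbconst; simpa using this
      have hc2pos : 0 < a.count 2 := List.count_pos_iff.mpr h2a
      have hckpos : 0 < a.count k := by
        rcases ha2k x0 hx0mem with h | h
        · omega
        · exact List.count_pos_iff.mpr (hx0eq ▸ hx0mem)
      by_cases hc21 : a.count 2 = 1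
      · -- contradiction: k ∣ 2
        exfalso
        have hdvd1 : k ∣ d := ⟨b.length, by rw [← hsumb, hsumbk]; ring⟩
        have hdvd2 : k ∣ k * a.count k := Dvd.intro _ rfl
        have hd2 : d = 2 + k * a.count k := by rw [← hsuma, hsum, hc21]
        have : k ∣ 2 := by
          have := Nat.dvd_sub hdvd1 hdvd2
          rw [hd2] at this; simpa using this
        have := Nat.le_of_dvd (by norm_num) this
        omega
      · -- count 2 ≥ 2 : FiveCases b a case (2)
        have hc22 : 2 ≤ a.count 2 := by omega
        have hla : a.getLastD 0 = 2 := getLastD_eq_two a hsa ha2 h2a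
        have hlast : a.getLast hne_a = 2 := by
          rw [← hla, List.getLastD_eq_getLast?, List.getLast?_eq_getLast hne_a]
          rfl
        have hcount_dl : 0 < a.dropLast.count 2 := by
          have happ := List.dropLast_append_getLast hne_a
          have : a.count 2 = a.dropLast.count 2 + ([a.getLast hne_a]).count 2 := by
            conv_lhs => rw [← happ]
            rw [List.count_append]
          rw [hlast] at this
          simp at this
          omega
        have h2dl : 2 ∈ a.dropLast := List.count_pos_iff.mp hcount_dl
        have hdla : a.dropLast.getLastD 0 = 2 :=
          getLastD_eq_two a.dropLast (hsa.sublist (List.dropLast_sublist _))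
            (fun x hx => ha2 x ((List.dropLast_sublist _).subset hx)) h2dl
        exact Or.inr (Or.inr (Or.inl ⟨fun x hx => by have := hb3 x hx; omega, ha2,
          hla, hdla⟩))
    · -- all of a equals k : case (5)
      have haconst : ∀ x ∈ a, x = k := by
        intro x hx
        rcases ha2k x hx with h | h
        · exact absurd (h ▸ hx) h2a
        · exact h
      exact Or.inl (Or.inr (Or.inr (Or.inr (Or.inr ⟨k, haconst, hbconst⟩))))

theorem stmt4 (g d : ℕ) (hg : 2 ≤ g) (hd : 2 ≤ d) (p2 p3 : List ℕ)
    (h2 : IsPartition d p2) (h3 : IsPartition d p3)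
    (hlen : p2.length + p3.length = d - 2 * g) :
    FiveCases p2 p3 ∨ FiveCases p3 p2 := by
  have hne2 : p2 ≠ [] := by
    intro h; rw [h] at h2; simp [IsPartition] at h2; omega
  have hne3 : p3 ≠ [] := by
    intro h; rw [h] at h3; simp [IsPartition] at h3; omega
  have hl2mem : p2.getLastD 0 ∈ p2 := my_getLastD_mem p2 hne2
  have hl3mem : p3.getLastD 0 ∈ p3 := my_getLastD_mem p3 hne3
  have hl2pos : 0 < p2.getLastD 0 := h2.2.1 _ hl2mem
  have hl3pos : 0 < p3.getLastD 0 := h3.2.1 _ hl3mem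
  by_cases hl31 : p3.getLastD 0 = 1
  · exact Or.inl (Or.inl hl31)
  by_cases hl21 : p2.getLastD 0 = 1
  · exact Or.inr (Or.inl hl21)
  have hge2_2 : ∀ x ∈ p2, 2 ≤ x := by
    intro x hx
    have := getLastD_le_of_sorted p2 h2.1 x hx
    omega
  have hge2_3 : ∀ x ∈ p3, 2 ≤ x := by
    intro x hx
    have := getLastD_le_of_sorted p3 h3.1 x hx
    omega
  by_cases hl32 : p3.getLastD 0 = 2
  · by_cases hl22 : p2.getLastD 0 = 2
    · exact Or.inl (Or.inr (Or.inr (Or.inl ⟨hl22, hl32⟩)))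
    · -- p2's last ≥ 3, so all of p2 ≥ 3
      have hge3 : ∀ x ∈ p2, 3 ≤ x := by
        intro x hx
        have := getLastD_le_of_sorted p2 h2.1 x hx
        omega
      exact (key_s4 d p3 p2 h3 h2 hne3 hne2 hge2_3 hge3).symm
  · -- p3's last ≥ 3, so all of p3 ≥ 3
    have hge3 : ∀ x ∈ p3, 3 ≤ x := by
      intro x hx
      have := getLastD_le_of_sorted p3 h3.1 x hx
      omega
    exact key_s4 d p2 p3 h2 h3 hne2 hne3 hge2_2 hge3
end

section
/- Let d = 2k be even and let (d_{2j})_{j=1}^{m_2}, (d_{3j})_{j=1}^{m_3} be partitions of 2k with m_2 + m_3 = 2k, all parts of (d_{2j}) even, and suppose it is not the case that (d_{2j}) = (2,...,2) with (d_{3j}) ∈ {(2,...,2), (k+1,1,...,1)}. Then (d_{3j}) refines the partition (k,k). -/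
private lemma len_le_sum' {l : List ℕ} {c : ℕ} (h : ∀ x ∈ l, c ≤ x) :
    c * l.length ≤ l.sum := by
  induction l with
  | nil => simp
  | cons a t ih =>
    have ha := h a (by simp)
    have ht := ih (fun x hx => h x (by simp [hx]))
    simp only [List.length_cons, List.sum_cons, Nat.mul_succ]
    omega

private lemma all_eq_c {l : List ℕ} {c : ℕ} (hc : 1 ≤ c) (h : ∀ x ∈ l, c ≤ x)
    (hs : l.sum = c * l.length) : l = List.replicate l.length c := by
  induction l with
  | nil => simp
  | cons a t ih =>
    have ha := h a List.mem_cons_self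
    have ht := len_le_sum' (fun x hx => h x (List.mem_cons_of_mem a hx))
    simp only [List.length_cons, List.sum_cons, Nat.mul_succ] at hs
    have hac : a = c := by omega
    have hts : t.sum = c * t.length := by omega
    have hrec := ih (fun x hx => h x (List.mem_cons_of_mem a hx)) hts
    rw [List.length_cons, List.replicate_succ, hac, ← hrec]

private lemma refines_of_sub {p : List ℕ} {k : ℕ} (u : Multiset ℕ)
    (hu : u ≤ (p : Multiset ℕ)) (hsum : u.sum = k) (hp : p.sum = 2 * k) :
    RefinesKK p k := by
  refine ⟨u.toList, ((p : Multiset ℕ) - u).toList, ?_, ?_, ?_⟩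
  · rw [← Multiset.coe_eq_coe, ← Multiset.coe_add, Multiset.coe_toList, Multiset.coe_toList,
      add_tsub_cancel_of_le hu]
  · rw [Multiset.sum_toList, hsum]
  · have h1 : u.sum + ((p : Multiset ℕ) - u).sum = (p : Multiset ℕ).sum := by
      rw [← Multiset.sum_add, add_tsub_cancel_of_le hu]
    have h2 : (p : Multiset ℕ).sum = 2 * k := by rwa [Multiset.sum_coe]
    rw [Multiset.sum_toList]
    omega

theorem stmt13 (k : ℕ) (hk : 1 ≤ k) (p2 p3 : List ℕ)
    (h2 : IsPartition (2 * k) p2) (h3 : IsPartition (2 * k) p3)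
    (hlen : p2.length + p3.length = 2 * k)
    (heven : ∀ x ∈ p2, Even x)
    (hexc : ¬(p2 = List.replicate k 2 ∧
      (p3 = List.replicate k 2 ∨ p3 = (k + 1) :: List.replicate (k - 1) 1))) :
    RefinesKK p3 k := by
  obtain ⟨h2sort, h2pos, h2sum⟩ := h2
  obtain ⟨hsort, hpos, hsum⟩ := h3
  -- parts of p2 are ≥ 2
  have h2two : ∀ x ∈ p2, 2 ≤ x := by
    intro x hx
    obtain ⟨c, hc⟩ := heven x hx
    have := h2pos x hx
    omega
  have hlen2 : 2 * p2.length ≤ 2 * k := h2sum ▸ len_le_sum' h2two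
  have hm : k ≤ p3.length := by omega
  -- if p3 has length k then p2 = replicate k 2
  have hp2rep : p3.length = k → p2 = List.replicate k 2 := by
    intro h
    have hl2 : p2.length = k := by omega
    have := all_eq_c (by norm_num) h2two (by omega)
    rwa [hl2] at this
  by_cases hbig : ∃ x ∈ p3, k + 1 ≤ x
  · -- forced exception (k+1, 1, ..., 1)
    exfalso
    obtain ⟨x, hx, hkx⟩ := hbig
    cases p3 with
    | nil => simp at hx
    | cons a t =>
      have hax : x ≤ a := by
        rcases List.mem_cons.mp hx with h | h
        · omega
        · exact List.rel_of_pairwise_cons hsort h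
      have ht1 : ∀ y ∈ t, 1 ≤ y := fun y hy => hpos y (by simp [hy])
      have htsum : 1 * t.length ≤ t.sum := len_le_sum' ht1
      simp only [List.sum_cons] at hsum
      simp only [List.length_cons] at hm hp2rep hlen
      have ha : a = k + 1 := by omega
      have htl : t.length = k - 1 := by omega
      have hts : t.sum = 1 * t.length := by omega
      have hrep := all_eq_c le_rfl ht1 hts
      rw [htl] at hrep
      exact hexc ⟨hp2rep (by omega), Or.inr (by rw [ha, hrep])⟩
  push_neg at hbig
  -- split into big parts and ones
  set L := p3.filter (fun x => decide (2 ≤ x)) with hLdef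
  set O := p3.filter (fun x => !decide (2 ≤ x)) with hOdef
  have hperm : (L ++ O).Perm p3 := List.filter_append_perm _ p3
  have hsplit : (L : Multiset ℕ) + (O : Multiset ℕ) = (p3 : Multiset ℕ) := by
    rw [Multiset.coe_add]; exact Multiset.coe_eq_coe.mpr hperm
  have hLmem : ∀ x ∈ L, 2 ≤ x := by
    intro x hx
    have := List.mem_filter.mp hx
    simpa using this.2
  have hLsub : ∀ x ∈ L, x ∈ p3 := fun x hx => (List.mem_filter.mp hx).1
  have hOone : ∀ x ∈ O, x = 1 := by
    intro x hx
    have h1 := List.mem_filter.mp hx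
    have h2 : ¬ (2 ≤ x) := by simpa using h1.2
    have := hpos x h1.1
    omega
  set s := O.length with hsdef
  have hOrep : O = List.replicate s 1 := List.eq_replicate_iff.mpr ⟨rfl, hOone⟩
  have hOcoe : (O : Multiset ℕ) = Multiset.replicate s 1 := by
    rw [hOrep, Multiset.coe_replicate]
  have hlensplit : L.length + s = p3.length := by
    have := hperm.length_eq; simpa using this
  have hsumsplit : L.sum + s = 2 * k := by
    have h := hperm.sum_eq
    rw [List.sum_append, hOrep, List.sum_replicate, smul_eq_mul, mul_one] at h
    omega
  have hLsorted : L.Pairwise (· ≥ ·) := List.Pairwise.filter _ hsort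
  by_cases hs0 : s = 0
  · -- p3 = replicate k 2, excluded
    exfalso
    have hLlen : k ≤ L.length := by omega
    have hLs : 2 * L.length ≤ L.sum := len_le_sum' hLmem
    have hLlenk : L.length = k := by omega
    have hLrep := all_eq_c (by norm_num) hLmem (by omega)
    rw [hLlenk] at hLrep
    have hOnil : O = [] := List.length_eq_zero_iff.mp (by omega)
    have hp3 : p3 = List.replicate k 2 := by
      have : (L ++ O).Perm p3 := hperm
      rw [hOnil, List.append_nil, hLrep] at this
      exact (List.perm_replicate.mp this.symm)
    exact hexc ⟨hp2rep (by omega), Or.inl hp3⟩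
  have hs1 : 1 ≤ s := by omega
  by_cases hSk : L.sum ≤ k
  · -- all big parts plus ones
    refine refines_of_sub ((L : Multiset ℕ) + Multiset.replicate (k - L.sum) 1) ?_ ?_ hsum
    · rw [← hsplit]
      refine add_le_add le_rfl ?_
      rw [hOcoe]
      exact (Multiset.replicate_le_replicate 1).mpr (by omega)
    · rw [Multiset.sum_add, Multiset.sum_coe, Multiset.sum_replicate, smul_eq_mul, mul_one]
      omega
  push_neg at hSk
  -- greedy on big parts
  have hLne : L ≠ [] := by
    intro h; rw [h] at hSk; simp at hSk
  have ht1 : 1 ≤ L.length := List.length_pos_iff.mpr hLne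
  have htake1 : (L.take 1).sum ≤ k := by
    obtain ⟨a, rest, hL⟩ := List.exists_cons_of_ne_nil hLne
    have ha := hbig a (hLsub a (by rw [hL]; exact List.mem_cons_self))
    rw [hL]
    simpa using Nat.lt_succ_iff.mp ha
  set j := Nat.findGreatest (fun i => (L.take i).sum ≤ k) L.length with hjdef
  have hPj : (L.take j).sum ≤ k := by
    rw [hjdef]
    exact Nat.findGreatest_spec (P := fun i => (L.take i).sum ≤ k) ht1 htake1
  have hjle : j ≤ L.length := by rw [hjdef]; exact Nat.findGreatest_le L.length
  have hjt : j < L.length := by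
    rcases lt_or_eq_of_le hjle with h | h
    · exact h
    · exfalso
      have h2 : (L.take j).sum = L.sum := by rw [h, List.take_length]
      omega
  have hj1 : 1 ≤ j := by
    by_contra hcon
    push_neg at hcon
    exact Nat.findGreatest_is_greatest (P := fun i => (L.take i).sum ≤ k)
      (by rw [hjdef] at hcon; exact hcon) ht1 htake1
  have hnext : ¬ ((L.take (j + 1)).sum ≤ k) :=
    Nat.findGreatest_is_greatest (P := fun i => (L.take i).sum ≤ k)
      (by rw [← hjdef]; omega) (by omega)
  set d := L[j]'hjt with hddef
  have hsucc : (L.take (j + 1)).sum = (L.take j).sum + d := List.sum_take_succ L j hjt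
  set q := (L.take j).sum with hqdef
  have hqk : q ≤ k := hPj
  have hqd : k + 1 ≤ q + d := by omega
  have htakele : ((L.take j : List ℕ) : Multiset ℕ) ≤ (p3 : Multiset ℕ) := by
    have h1 : ((L.take j : List ℕ) : Multiset ℕ) ≤ (L : Multiset ℕ) :=
      Multiset.coe_le.mpr (List.take_sublist j L).subperm
    calc ((L.take j : List ℕ) : Multiset ℕ) ≤ (L : Multiset ℕ) := h1
      _ ≤ (L : Multiset ℕ) + (O : Multiset ℕ) := le_add_right le_rfl
      _ = (p3 : Multiset ℕ) := hsplit
  by_cases hqeq : q = k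
  · exact refines_of_sub ((L.take j : List ℕ) : Multiset ℕ) htakele
      (by rw [Multiset.sum_coe, ← hqdef, hqeq]) hsum
  have hqlt : q < k := by omega
  -- show enough ones: k - q ≤ s
  have hcs : k - q ≤ s := by
    by_contra hcon
    push_neg at hcon
    have hsd : s + 2 ≤ d := by omega
    -- elements of take j are ≥ d
    have hdmem : d ∈ L.drop j := by
      rw [List.drop_eq_getElem_cons hjt]; exact List.mem_cons_self
    have htakege : ∀ x ∈ L.take j, d ≤ x := by
      have hp : List.Pairwise (· ≥ ·) (L.take j ++ L.drop j) := by
        rw [List.take_append_drop]; exact hLsorted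
      intro x hx
      exact (List.pairwise_append.mp hp).2.2 x hx d hdmem
    have hjd : j * d ≤ q := by
      have := len_le_sum' htakege
      rwa [List.length_take, min_eq_left (by omega), Nat.mul_comm] at this
    have hq2 : s + 2 * j ≤ q := by
      have h1 : s ≤ j * s := Nat.le_mul_of_pos_left s (by omega)
      have h2 : j * (s + 2) ≤ j * d := Nat.mul_le_mul_left j hsd
      have h3 : j * (s + 2) = j * s + 2 * j := by ring
      calc s + 2 * j ≤ j * s + 2 * j := by omega
        _ = j * (s + 2) := by omega
        _ ≤ j * d := h2
        _ ≤ q := hjd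
    have hdrop2 : ∀ x ∈ L.drop (j + 1), 2 ≤ x :=
      fun x hx => hLmem x (List.mem_of_mem_drop hx)
    have hdrops : 2 * (L.drop (j + 1)).length ≤ (L.drop (j + 1)).sum :=
      len_le_sum' hdrop2
    have hdlen : (L.drop (j + 1)).length = L.length - (j + 1) := by
      rw [List.length_drop]
    have htot : q + d + (L.drop (j + 1)).sum = L.sum := by
      have h4 : (L.take (j+1)).sum + (L.drop (j+1)).sum = L.sum := by
        rw [← List.sum_append, List.take_append_drop]
      omega
    omega
  refine refines_of_sub (((L.take j : List ℕ) : Multiset ℕ) + Multiset.replicate (k - q) 1)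
    ?_ ?_ hsum
  · rw [← hsplit]
    refine add_le_add (Multiset.coe_le.mpr (List.take_sublist j L).subperm) ?_
    rw [hOcoe]
    exact (Multiset.replicate_le_replicate 1).mpr hcs
  · rw [Multiset.sum_add, Multiset.sum_coe, Multiset.sum_replicate, smul_eq_mul, mul_one]
    omega
end

section
/- Let d = 2k ≥ 4 and let (d_{2j})_{j=1}^{m_2}, (d_{3j})_{j=1}^{m_3} be partitions of 2k with m_2 + m_3 = 2k, each containing at least one odd part. Then, up to swapping the two partitions, d_{21} ≥ 3 and d_{3,m_3} = 1. -/
private lemma myGetLastD_mem : ∀ (l : List ℕ), l ≠ [] → l.getLastD 0 ∈ l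
  | [], h => absurd rfl h
  | [a], _ => by simp
  | a :: b :: t, _ => by
    have := myGetLastD_mem (b :: t) (by simp)
    simp only [List.getLastD_cons] at *
    exact List.mem_cons_of_mem _ this

private lemma le_headD_of_mem {l : List ℕ} (hs : l.Pairwise (· ≥ ·)) {x : ℕ}
    (hx : x ∈ l) : x ≤ l.headD 0 := by
  cases l with
  | nil => simp at hx
  | cons a t =>
    rcases List.mem_cons.1 hx with rfl | h
    · simp
    · exact (List.pairwise_cons.1 hs).1 x h

private lemma getLastD_le_of_mem : ∀ {l : List ℕ}, l.Pairwise (· ≥ ·) → ∀ {x : ℕ},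
    x ∈ l → l.getLastD 0 ≤ x
  | [], _, _, hx => by simp at hx
  | [a], _, x, hx => by simp at hx ⊢; omega
  | a :: b :: t, hs, x, hx => by
    have hs' : (b :: t).Pairwise (· ≥ ·) := (List.pairwise_cons.1 hs).2
    have hgl : (a :: b :: t).getLastD 0 = (b :: t).getLastD 0 := by
      simp [List.getLastD_cons]
    rw [hgl]
    rcases List.mem_cons.1 hx with rfl | h
    · have hmem := myGetLastD_mem (b :: t) (by simp)
      have := (List.pairwise_cons.1 hs).1 _ hmem
      exact this
    · exact getLastD_le_of_mem hs' h

private lemma mul_length_le_sum : ∀ (l : List ℕ) (a : ℕ), (∀ x ∈ l, a ≤ x) →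
    a * l.length ≤ l.sum
  | [], _, _ => by simp
  | x :: t, a, h => by
    have := mul_length_le_sum t a (fun y hy => h y (List.mem_cons_of_mem _ hy))
    have hx := h x (List.mem_cons_self)
    simp only [List.sum_cons, List.length_cons]
    nlinarith

private lemma sum_le_mul_length : ∀ (l : List ℕ) (b : ℕ), (∀ x ∈ l, x ≤ b) →
    l.sum ≤ b * l.length
  | [], _, _ => by simp
  | x :: t, b, h => by
    have := sum_le_mul_length t b (fun y hy => h y (List.mem_cons_of_mem _ hy))
    have hx := h x (List.mem_cons_self)
    simp only [List.sum_cons, List.length_cons]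
    nlinarith

private lemma sumA {l : List ℕ} (h1 : (1:ℕ) ∈ l) (hle : ∀ x ∈ l, x ≤ 2) :
    l.sum + 1 ≤ 2 * l.length := by
  obtain ⟨s, t, rfl⟩ := List.append_of_mem h1
  have hs := sum_le_mul_length s 2 (fun x hx => hle x (by simp [hx]))
  have ht := sum_le_mul_length t 2 (fun x hx => hle x (by simp [hx]))
  simp only [List.sum_append, List.sum_cons, List.length_append, List.length_cons]
  omega

private lemma sumB {l : List ℕ} {x : ℕ} (hx : x ∈ l) (h3 : 3 ≤ x)
    (hge : ∀ y ∈ l, 2 ≤ y) : 2 * l.length + 1 ≤ l.sum := by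
  obtain ⟨s, t, rfl⟩ := List.append_of_mem hx
  have hs := mul_length_le_sum s 2 (fun y hy => hge y (by simp [hy]))
  have ht := mul_length_le_sum t 2 (fun y hy => hge y (by simp [hy]))
  simp only [List.sum_append, List.sum_cons, List.length_append, List.length_cons]
  omega

private lemma last_eq_one {l : List ℕ} (hs : l.Pairwise (· ≥ ·))
    (hpos : ∀ x ∈ l, 0 < x) (h1 : (1:ℕ) ∈ l) : l.getLastD 0 = 1 := by
  have hne : l ≠ [] := List.ne_nil_of_mem h1
  have hmem := myGetLastD_mem l hne
  have h1' := getLastD_le_of_mem hs h1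
  have := hpos _ hmem
  omega

theorem stmt15 (k : ℕ) (hk : 2 ≤ k) (p2 p3 : List ℕ)
    (h2 : IsPartition (2 * k) p2) (h3 : IsPartition (2 * k) p3)
    (hlen : p2.length + p3.length = 2 * k)
    (ho2 : ∃ x ∈ p2, Odd x) (ho3 : ∃ x ∈ p3, Odd x) :
    (3 ≤ p2.headD 0 ∧ p3.getLastD 0 = 1) ∨
    (3 ≤ p3.headD 0 ∧ p2.getLastD 0 = 1) := by
  obtain ⟨hs2, hpos2, hsum2⟩ := h2
  obtain ⟨hs3, hpos3, hsum3⟩ := h3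
  by_cases hB : 3 ≤ p2.headD 0
  · by_cases h1 : (1:ℕ) ∈ p3
    · exact Or.inl ⟨hB, last_eq_one hs3 hpos3 h1⟩
    · -- all parts of p3 are ≥ 2
      have hge3 : ∀ x ∈ p3, 2 ≤ x := by
        intro x hx
        have := hpos3 x hx
        rcases Nat.lt_or_ge x 2 with h | h
        · have hx1 : x = 1 := by omega
          subst hx1
          exact absurd hx h1
        · exact h
      obtain ⟨x, hx, hox⟩ := ho3
      have hx3 : 3 ≤ x := by
        obtain ⟨c, rfl⟩ := hox
        have := hge3 _ hx
        omega
      have hhead3 : 3 ≤ p3.headD 0 := le_trans hx3 (le_headD_of_mem hs3 hx)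
      have hm3 : 2 * p3.length + 1 ≤ 2 * k := by
        have := sumB hx hx3 hge3
        omega
      -- so p2 must contain a 1
      have h1p2 : (1:ℕ) ∈ p2 := by
        by_contra h1'
        have hge2 : ∀ x ∈ p2, 2 ≤ x := by
          intro y hy
          have := hpos2 y hy
          rcases Nat.lt_or_ge y 2 with h | h
          · have hy1 : y = 1 := by omega
            subst hy1
            exact absurd hy h1'
          · exact h
        have := mul_length_le_sum p2 2 hge2
        omega
      exact Or.inr ⟨hhead3, last_eq_one hs2 hpos2 h1p2⟩
  · -- p2.headD 0 ≤ 2, so all parts of p2 ≤ 2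
    have hle2 : ∀ x ∈ p2, x ≤ 2 := fun x hx =>
      le_trans (le_headD_of_mem hs2 hx) (by omega)
    obtain ⟨x, hx, hox⟩ := ho2
    have hx1 : x = 1 := by
      obtain ⟨c, rfl⟩ := hox
      have := hle2 _ hx
      omega
    subst hx1
    have hlast2 := last_eq_one hs2 hpos2 hx
    have hhead3 : 3 ≤ p3.headD 0 := by
      by_contra hC
      have hle3 : ∀ y ∈ p3, y ≤ 2 := fun y hy =>
        le_trans (le_headD_of_mem hs3 hy) (by omega)
      obtain ⟨y, hy, hoy⟩ := ho3
      have hy1 : y = 1 := by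
        obtain ⟨c, rfl⟩ := hoy
        have := hle3 _ hy
        omega
      subst hy1
      have hA2 := sumA hx hle2
      have hA3 := sumA hy hle3
      omega
    exact Or.inr ⟨hhead3, hlast2⟩
end

section
/- A minimal checkerboard graph on a closed surface has complement consisting of exactly one black disc and one white disc. -/
/- A combinatorial abstraction of a minimal checkerboard graph on a closed surface:
`V` is the (nonempty) vertex set of the graph `G`, which is connected since its
complement consists of discs; `F` is the set of complementary discs (faces) with a
black/white coloring; `inc v f` means the disc `f` is incident to the vertex `v`.
Each face is incident to some vertex; each edge of `G` separates a black disc from a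
white one, so adjacent vertices share an incident black disc and an incident white
disc; minimality says that at each vertex there is exactly one incident black disc
and exactly one incident white disc. Conclusion: there is exactly one black disc
and exactly one white disc. -/
theorem stmt19 (V F : Type) [Nonempty V]
    (adj : V → V → Prop)
    (hsym : ∀ v w, adj v w → adj w v)
    (hconn : ∀ v w : V, Relation.ReflTransGen adj v w)
    (color : F → Bool)
    (inc : V → F → Prop)
    (hface : ∀ f : F, ∃ v, inc v f)
    (hmin_black : ∀ v : V, ∃! f, color f = true ∧ inc v f)
    (hmin_white : ∀ v : V, ∃! f, color f = false ∧ inc v f)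
    (hadj_black : ∀ v w, adj v w → ∃ f, color f = true ∧ inc v f ∧ inc w f)
    (hadj_white : ∀ v w, adj v w → ∃ f, color f = false ∧ inc v f ∧ inc w f) :
    (∃! f, color f = true) ∧ (∃! f, color f = false) := by
  have key : ∀ (c : Bool) (hmin : ∀ v : V, ∃! f, color f = c ∧ inc v f)
      (hadj : ∀ v w, adj v w → ∃ f, color f = c ∧ inc v f ∧ inc w f),
      ∃! f, color f = c := by
    intro c hmin hadj
    have main : ∀ v w : V, Relation.ReflTransGen adj v w →
        ∀ f g, (color f = c ∧ inc v f) → (color g = c ∧ inc w g) → f = g := by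
      intro v w hvw
      induction hvw with
      | refl =>
        intro f g hf hg
        obtain ⟨b, hb, hbu⟩ := hmin v
        rw [hbu f hf, hbu g hg]
      | tail _ hcw ih =>
        rename_i x w' _
        intro f g hf hg
        obtain ⟨h, hh1, hh2, hh3⟩ := hadj x w' hcw
        obtain ⟨b, hb, hbu⟩ := hmin w'
        rw [ih f h hf ⟨hh1, hh2⟩, hbu h ⟨hh1, hh3⟩, hbu g hg]
    obtain ⟨v0⟩ := ‹Nonempty V›
    obtain ⟨b, hb, _⟩ := hmin v0
    refine ⟨b, hb.1, ?_⟩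
    intro f hf
    obtain ⟨v, hv⟩ := hface f
    exact main v v0 (hconn v v0) f b ⟨hf, hv⟩ hb
  exact ⟨key true hmin_black hadj_black, key false hmin_white hadj_white⟩
end
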